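/- Let T = [0,1]^d, I a countable index set, (a_j)_{j∈I} real numbers with ∑_{j∈I}|a_j| < ∞, and for each n ≥ 1 and j ∈ I let U_j^{(n)} be a random element of C([0,1]^d, ℝ) (with the supremum norm) on a common probability space with sup_n sup_{j∈I} E(‖U_j^{(n)}‖_T) < ∞. Define ψ^{(n)} = ∑_{j∈I} a_j U_j^{(n)} (the series converging in supremum norm a.s.). Let (I_m)_{m≥1} be an increasing sequence of finite subsets of I with I = ∪_m I_m, and suppose that for each m the finite sum ∑_{j∈I_m} a_j U_j^{(n)} converges in distribution, as n → ∞, to a random element Z_m of C([0,1]^d, ℝ). Then there exists a random element Z of C([0,1]^d, ℝ) such that Z_m converges in distribution to Z as m → ∞ and ψ^{(n)} converges in distribution to Z as n → ∞. -/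

import Mathlib

open MeasureTheory Filter Topology ENNReal

/-- The space `C([0,1]^d, ℝ)` of continuous real functions on the cube, with the
supremum norm (it carries a `NormedAddCommGroup` instance since the cube is compact). -/
abbrev Cube (d : ℕ) : Type := Fin d → Set.Icc (0 : ℝ) 1

set_option linter.unusedSectionVars false

open MeasureTheory Filter Topology ENNReal Metric Set TopologicalSpace

namespace PUaux

variable {X : Type*} [MetricSpace X] [CompleteSpace X] [SecondCountableTopology X]
  [MeasurableSpace X] [BorelSpace X]

variable (P : ℕ → Measure X)

/-- real-valued measure sequence -/
noncomputable def uu (U : Set X) : ℕ → ℝ := fun m => (P m U).toReal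

/-- liminf functional on sets -/
noncomputable def LL (U : Set X) : ℝ := atTop.liminf (uu P U)

variable {P}

section basic

variable (hP : ∀ m, IsProbabilityMeasure (P m))
include hP

lemma uu_nonneg (U : Set X) (m : ℕ) : 0 ≤ uu P U m := ENNReal.toReal_nonneg

lemma uu_le_one (U : Set X) (m : ℕ) : uu P U m ≤ 1 := by
  haveI := hP m
  have h1 : P m U ≤ 1 := prob_le_one
  have := ENNReal.toReal_mono (by simp) h1
  simpa [uu] using this

lemma uu_bddLe (U : Set X) : IsBoundedUnder (· ≤ ·) atTop (uu P U) :=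
  isBoundedUnder_of ⟨1, fun m => uu_le_one hP U m⟩

lemma uu_bddGe (U : Set X) : IsBoundedUnder (· ≥ ·) atTop (uu P U) :=
  isBoundedUnder_of ⟨0, fun m => uu_nonneg hP U m⟩

lemma uu_mono {U V : Set X} (hUV : U ⊆ V) (m : ℕ) : uu P U m ≤ uu P V m :=
  ENNReal.toReal_mono (measure_ne_top _ _) (measure_mono hUV)

lemma LL_nonneg (U : Set X) : 0 ≤ LL P U :=
  le_liminf_of_le ((uu_bddLe hP U).isCoboundedUnder_ge)
    (Eventually.of_forall fun m => uu_nonneg hP U m)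

lemma LL_le_one (U : Set X) : LL P U ≤ 1 :=
  liminf_le_of_frequently_le (Frequently.of_forall fun m => uu_le_one hP U m)
    (uu_bddGe hP U)

lemma LL_mono {U V : Set X} (hUV : U ⊆ V) : LL P U ≤ LL P V :=
  liminf_le_liminf (Eventually.of_forall fun m => uu_mono hP hUV m)
    (uu_bddGe hP U) ((uu_bddLe hP V).isCoboundedUnder_ge)

end basic

/-- The candidate content value on a compact set. -/
noncomputable def lam (P : ℕ → Measure X) (K : Set X) : ℝ :=
  sInf (LL P '' {U : Set X | IsOpen U ∧ K ⊆ U})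

section lamsec

variable (hP : ∀ m, IsProbabilityMeasure (P m))
include hP

lemma lam_S_nonempty (K : Set X) : (LL P '' {U : Set X | IsOpen U ∧ K ⊆ U}).Nonempty :=
  ⟨LL P univ, ⟨univ, ⟨isOpen_univ, subset_univ K⟩, rfl⟩⟩

lemma lam_S_bddBelow (K : Set X) : BddBelow (LL P '' {U : Set X | IsOpen U ∧ K ⊆ U}) := by
  refine ⟨0, fun x hx => ?_⟩
  obtain ⟨U, _, rfl⟩ := hx
  exact LL_nonneg hP U

lemma lam_le {K U : Set X} (hU : IsOpen U) (hKU : K ⊆ U) : lam P K ≤ LL P U :=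
  csInf_le (lam_S_bddBelow hP K) ⟨U, ⟨hU, hKU⟩, rfl⟩

lemma lam_nonneg (K : Set X) : 0 ≤ lam P K := by
  apply le_csInf (lam_S_nonempty hP K)
  rintro x ⟨U, _, rfl⟩
  exact LL_nonneg hP U

lemma lam_le_one (K : Set X) : lam P K ≤ 1 :=
  (lam_le hP isOpen_univ (subset_univ K)).trans (LL_le_one hP univ)

lemma lam_mono {K L : Set X} (hKL : K ⊆ L) : lam P K ≤ lam P L := by
  apply csInf_le_csInf (lam_S_bddBelow hP K) (lam_S_nonempty hP L)
  rintro x ⟨U, ⟨hU, hLU⟩, rfl⟩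
  exact ⟨U, ⟨hU, hKL.trans hLU⟩, rfl⟩

lemma exists_open_LL_lt {K : Set X} {b : ℝ} (hb : lam P K < b) :
    ∃ U : Set X, IsOpen U ∧ K ⊆ U ∧ LL P U < b := by
  rw [lam, csInf_lt_iff (lam_S_bddBelow hP K) (lam_S_nonempty hP K)] at hb
  obtain ⟨x, ⟨U, ⟨hU, hKU⟩, rfl⟩, hxb⟩ := hb
  exact ⟨U, hU, hKU, hxb⟩

end lamsec

section cauchy

variable (hP : ∀ m, IsProbabilityMeasure (P m))
variable (hc : ∀ ε : ℝ, 0 < ε → ∃ N : ℕ, ∀ m, N ≤ m → ∀ k, N ≤ k →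
    levyProkhorovEDist (P m) (P k) ≤ ENNReal.ofReal ε)
include hP hc

/-- Key transfer lemma: thickening a compact inside an open set, the limsup of measures of the
thickening is at most the liminf of measures of the open set, thanks to the Cauchy property. -/
lemma exists_thickening_limsup_le {K U : Set X} (hK : IsCompact K) (hU : IsOpen U)
    (hKU : K ⊆ U) :
    ∃ V : Set X, IsOpen V ∧ K ⊆ V ∧ V ⊆ U ∧
      atTop.limsup (uu P V) ≤ LL P U := by
  obtain ⟨δ, δpos, hδ⟩ := hK.exists_thickening_subset_open hU hKU
  refine ⟨thickening (δ/2) K, isOpen_thickening, self_subset_thickening (by linarith) K,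
    (thickening_mono (by linarith) K).trans hδ, ?_⟩
  -- show `limsup ≤ LL P U + ε` for every `ε > 0`
  apply _root_.le_of_forall_pos_le_add
  intro ε εpos
  set r : ℝ := min ε (δ/4) with hr
  have rpos : 0 < r := lt_min εpos (by linarith)
  have rε : r ≤ ε := min_le_left _ _
  have rδ : r ≤ δ/4 := min_le_right _ _
  obtain ⟨N, hN⟩ := hc (r/2) (by linarith)
  have key : ∀ m, N ≤ m → uu P (thickening (δ/2) K) m ≤ LL P U + r := by
    intro m hm
    have step : ∀ k, N ≤ k → uu P (thickening (δ/2) K) m ≤ uu P U k + r := by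
      intro k hk
      have hlt : levyProkhorovEDist (P m) (P k) < ENNReal.ofReal r :=
        lt_of_le_of_lt (hN m hm k hk) (ENNReal.ofReal_lt_ofReal_iff rpos |>.mpr (by linarith))
      have h1 := left_measure_le_of_levyProkhorovEDist_lt hlt
        (B := thickening (δ/2) K) isOpen_thickening.measurableSet
      rw [ENNReal.toReal_ofReal rpos.le] at h1
      have hsub : thickening r (thickening (δ/2) K) ⊆ U := by
        refine (thickening_thickening_subset r (δ/2) K).trans ?_
        exact (thickening_mono (by linarith) K).trans hδ
      have h2 : P m (thickening (δ/2) K) ≤ P k U + ENNReal.ofReal r :=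
        h1.trans (add_le_add_left (measure_mono hsub) _)
      have h3 := ENNReal.toReal_mono
        (by simp [measure_ne_top, ENNReal.add_ne_top, ENNReal.ofReal_ne_top]) h2
      rw [ENNReal.toReal_add (measure_ne_top _ _) ENNReal.ofReal_ne_top,
        ENNReal.toReal_ofReal rpos.le] at h3
      exact h3
    -- pass to liminf over k
    have hev : ∀ᶠ k in atTop, uu P (thickening (δ/2) K) m - r ≤ uu P U k := by
      filter_upwards [eventually_ge_atTop N] with k hk
      linarith [step k hk]
    have := le_liminf_of_le ((uu_bddLe hP U).isCoboundedUnder_ge) hev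
    have hLL : uu P (thickening (δ/2) K) m - r ≤ LL P U := this
    linarith
  have hlimsup := limsup_le_of_le ((uu_bddGe hP (thickening (δ/2) K)).isCoboundedUnder_le)
    ((eventually_ge_atTop N).mono key)
  calc atTop.limsup (uu P (thickening (δ/2) K)) ≤ LL P U + r := hlimsup
    _ ≤ LL P U + ε := by linarith

lemma lam_sup_le (K₁ K₂ : Set X) (hK₂ : IsCompact K₂) :
    lam P (K₁ ∪ K₂) ≤ lam P K₁ + lam P K₂ := by
  have h2 : ∀ ε : ℝ, 0 < ε → lam P (K₁ ∪ K₂) ≤ lam P K₁ + lam P K₂ + (ε + ε) := by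
    intro ε εpos
    obtain ⟨U₁, hU₁, hKU₁, hLL₁⟩ := exists_open_LL_lt hP
      (show lam P K₁ < lam P K₁ + ε by linarith)
    obtain ⟨U₂, hU₂, hKU₂, hLL₂⟩ := exists_open_LL_lt hP
      (show lam P K₂ < lam P K₂ + ε by linarith)
    obtain ⟨V₂, hV₂, hKV₂, _, hlims⟩ := exists_thickening_limsup_le hP hc hK₂ hU₂ hKU₂
    have hopen : IsOpen (U₁ ∪ V₂) := hU₁.union hV₂
    have hsub : K₁ ∪ K₂ ⊆ U₁ ∪ V₂ := union_subset_union hKU₁ hKV₂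
    have hlam : lam P (K₁ ∪ K₂) ≤ LL P (U₁ ∪ V₂) := lam_le hP hopen hsub
    have hptwise : ∀ᶠ m in atTop, uu P (U₁ ∪ V₂) m ≤ (uu P V₂ + uu P U₁) m := by
      refine Eventually.of_forall fun m => ?_
      have h := measure_union_le (μ := P m) U₁ V₂
      have := ENNReal.toReal_mono
        (by simp [measure_ne_top, ENNReal.add_ne_top]) h
      rw [ENNReal.toReal_add (measure_ne_top _ _) (measure_ne_top _ _)] at this
      simpa [uu, Pi.add_apply, add_comm] using this
    have hmono : LL P (U₁ ∪ V₂) ≤ atTop.liminf (uu P V₂ + uu P U₁) :=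
      liminf_le_liminf hptwise (uu_bddGe hP (U₁ ∪ V₂))
        ((isBoundedUnder_of ⟨2, fun m => by
          have := add_le_add (uu_le_one hP V₂ m) (uu_le_one hP U₁ m)
          norm_num at this ⊢
          simpa using this⟩ : IsBoundedUnder (· ≤ ·) atTop (uu P V₂ + uu P U₁)).isCoboundedUnder_ge)
    have hadd : atTop.liminf (uu P V₂ + uu P U₁) ≤
        atTop.limsup (uu P V₂) + atTop.liminf (uu P U₁) :=
      liminf_add_le (isBoundedUnder_of ⟨0, fun m => uu_nonneg hP V₂ m⟩)
        (uu_bddLe hP V₂) (isBoundedUnder_of ⟨0, fun m => uu_nonneg hP U₁ m⟩)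
        ((uu_bddLe hP U₁).isCoboundedUnder_ge)
    have : lam P (K₁ ∪ K₂) ≤ atTop.limsup (uu P V₂) + LL P U₁ :=
      hlam.trans (hmono.trans hadd)
    have hfin : lam P (K₁ ∪ K₂) ≤ LL P U₂ + LL P U₁ :=
      this.trans (add_le_add hlims le_rfl)
    nlinarith [hfin, hLL₁, hLL₂]
  -- conclude
  apply _root_.le_of_forall_pos_le_add
  intro ε εpos
  have := h2 (ε/2) (by linarith)
  linarith

lemma lam_sup_disjoint (K₁ K₂ : Set X) (h : Disjoint K₁ K₂)
    (hK₁ : IsCompact K₁) (hK₂ : IsCompact K₂) :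
    lam P K₁ + lam P K₂ ≤ lam P (K₁ ∪ K₂) := by
  obtain ⟨δ, δpos, hdisj⟩ := h.exists_thickenings hK₁ hK₂.isClosed
  apply le_csInf (lam_S_nonempty hP (K₁ ∪ K₂))
  rintro x ⟨U, ⟨hU, hKU⟩, rfl⟩
  set V₁ : Set X := U ∩ thickening δ K₁ with hV₁def
  set V₂ : Set X := U ∩ thickening δ K₂ with hV₂def
  have hV₁ : IsOpen V₁ := hU.inter isOpen_thickening
  have hV₂ : IsOpen V₂ := hU.inter isOpen_thickening
  have hKV₁ : K₁ ⊆ V₁ := subset_inter ((subset_union_left).trans hKU)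
    (self_subset_thickening δpos K₁)
  have hKV₂ : K₂ ⊆ V₂ := subset_inter ((subset_union_right).trans hKU)
    (self_subset_thickening δpos K₂)
  have hVdisj : Disjoint V₁ V₂ :=
    (hdisj.mono (inter_subset_right) (inter_subset_right))
  have hsum : ∀ m, uu P V₁ m + uu P V₂ m ≤ uu P U m := by
    intro m
    have hunion : P m (V₁ ∪ V₂) = P m V₁ + P m V₂ :=
      measure_union hVdisj hV₂.measurableSet
    have hle : P m V₁ + P m V₂ ≤ P m U := by
      rw [← hunion]
      exact measure_mono (union_subset inter_subset_left inter_subset_left)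
    have := ENNReal.toReal_mono (measure_ne_top _ _) hle
    rw [ENNReal.toReal_add (measure_ne_top _ _) (measure_ne_top _ _)] at this
    exact this
  have h1 : lam P K₁ + lam P K₂ ≤ LL P V₁ + LL P V₂ :=
    add_le_add (lam_le hP hV₁ hKV₁) (lam_le hP hV₂ hKV₂)
  have h2 : LL P V₁ + LL P V₂ ≤ atTop.liminf (uu P V₁ + uu P V₂) :=
    le_liminf_add (isBoundedUnder_of ⟨0, fun m => uu_nonneg hP V₁ m⟩)
      (uu_bddLe hP V₁) (isBoundedUnder_of ⟨0, fun m => uu_nonneg hP V₂ m⟩)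
      ((uu_bddLe hP V₂).isCoboundedUnder_ge)
  have h3 : atTop.liminf (uu P V₁ + uu P V₂) ≤ LL P U :=
    liminf_le_liminf (Eventually.of_forall fun m => by simpa using hsum m)
      (isBoundedUnder_of ⟨0, fun m => by
        have := add_le_add (uu_nonneg hP V₁ m) (uu_nonneg hP V₂ m)
        simpa using this⟩)
      ((uu_bddLe hP U).isCoboundedUnder_ge)
  linarith [h1, h2, h3]

end cauchy

end PUaux

namespace PUaux

variable {X : Type*} [MetricSpace X] [CompleteSpace X] [SecondCountableTopology X]
  [MeasurableSpace X] [BorelSpace X]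

variable {P : ℕ → Measure X}

section tight

variable (hP : ∀ m, IsProbabilityMeasure (P m))
variable (hc : ∀ ε : ℝ, 0 < ε → ∃ N : ℕ, ∀ m, N ≤ m → ∀ k, N ≤ k →
    levyProkhorovEDist (P m) (P k) ≤ ENNReal.ofReal ε)
include hP hc

lemma ball_cover (x : ℕ → X) (hx : DenseRange x) {δ ε : ℝ} (hδ : 0 < δ) (hε : 0 < ε) :
    ∃ n : ℕ, ∀ m, 1 - ENNReal.ofReal ε ≤ P m (⋃ i ∈ Finset.range n, ball (x i) δ) := by
  haveI := fun m => hP m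
  set c : ℝ := min (δ/2) (ε/2) with hcdef
  have cpos : 0 < c := lt_min (by linarith) (by linarith)
  obtain ⟨N, hN⟩ := hc (c/2) (by linarith)
  set B : ℕ → Set X := fun n => ⋃ i ∈ Finset.range n, ball (x i) (δ/2) with hBdef
  have hBmono : Monotone B := by
    intro p q hpq
    apply Set.biUnion_subset_biUnion_left
    intro i hi
    exact Finset.mem_range.mpr (lt_of_lt_of_le (Finset.mem_range.mp hi) hpq)
  have hBunion : ⋃ n, B n = univ := by
    apply eq_univ_of_forall
    intro y
    obtain ⟨i, hi⟩ := hx.exists_dist_lt y (by linarith : (0:ℝ) < δ/2)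
    exact mem_iUnion.mpr ⟨i+1, mem_iUnion₂.mpr ⟨i, Finset.mem_range.mpr (Nat.lt_succ_self i),
      mem_ball.mpr hi⟩⟩
  have hlt : 1 - ENNReal.ofReal (ε/2) < 1 :=
    ENNReal.sub_lt_self one_ne_top one_ne_zero
      (ne_of_gt (ENNReal.ofReal_pos.mpr (by linarith)))
  have hev : ∀ᶠ n in atTop, ∀ j ∈ Finset.range (N+1),
      1 - ENNReal.ofReal (ε/2) < P j (B n) := by
    rw [Finset.eventually_all]
    intro j _
    have htend : Tendsto (fun n => P j (B n)) atTop (𝓝 (P j univ)) := by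
      have := tendsto_measure_iUnion_atTop (μ := P j) hBmono
      rwa [hBunion] at this
    rw [measure_univ] at htend
    exact htend.eventually (lt_mem_nhds hlt)
  obtain ⟨n, hn⟩ := hev.exists
  refine ⟨n, fun m => ?_⟩
  set T : Set X := ⋃ i ∈ Finset.range n, ball (x i) δ with hTdef
  have hBT : B n ⊆ T := by
    exact Set.iUnion₂_mono fun i _ => ball_subset_ball (by linarith)
  rcases le_or_gt m N with hm | hm
  · have h1 : 1 - ENNReal.ofReal (ε/2) ≤ P m T :=
      ((hn m (Finset.mem_range.mpr (Nat.lt_succ_of_le hm))).le).trans (measure_mono hBT)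
    exact le_trans (tsub_le_tsub_left (ENNReal.ofReal_le_ofReal (by linarith)) 1) h1
  · -- use the Cauchy property
    have hlp : levyProkhorovEDist (P N) (P m) < ENNReal.ofReal c :=
      lt_of_le_of_lt (hN N le_rfl m hm.le)
        ((ENNReal.ofReal_lt_ofReal_iff cpos).mpr (by linarith))
    have hmeas : MeasurableSet (B n) := by
      apply MeasurableSet.biUnion (Finset.countable_toSet _)
      intro i _
      exact measurableSet_ball
    have h1 := left_measure_le_of_levyProkhorovEDist_lt hlp hmeas
    rw [ENNReal.toReal_ofReal cpos.le] at h1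
    have hthick : thickening c (B n) ⊆ T := by
      intro z hz
      obtain ⟨w, hw, hzw⟩ := mem_thickening_iff.mp hz
      obtain ⟨i, hi, hwi⟩ := mem_iUnion₂.mp hw
      refine mem_iUnion₂.mpr ⟨i, hi, mem_ball.mpr ?_⟩
      have h2 : dist w (x i) < δ/2 := mem_ball.mp hwi
      have h3 : c ≤ δ/2 := min_le_left _ _
      calc dist z (x i) ≤ dist z w + dist w (x i) := dist_triangle _ _ _
        _ < δ := by linarith
    have h2 : P N (B n) ≤ P m T + ENNReal.ofReal c :=
      h1.trans (add_le_add_left (measure_mono hthick) _)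
    have h3 : 1 - ENNReal.ofReal (ε/2) ≤ P m T + ENNReal.ofReal c :=
      (hn N (Finset.mem_range.mpr (Nat.lt_succ_self N))).le.trans h2
    -- conclude `1 - ofReal ε ≤ P m T`
    rw [tsub_le_iff_right]
    calc (1:ℝ≥0∞) ≤ (1 - ENNReal.ofReal (ε/2)) + ENNReal.ofReal (ε/2) := le_tsub_add
      _ ≤ (P m T + ENNReal.ofReal c) + ENNReal.ofReal (ε/2) := add_le_add_left h3 _
      _ ≤ (P m T + ENNReal.ofReal (ε/2)) + ENNReal.ofReal (ε/2) := by
          gcongr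
          exact min_le_right _ _
      _ = P m T + (ENNReal.ofReal (ε/2) + ENNReal.ofReal (ε/2)) := by ring
      _ = P m T + ENNReal.ofReal ε := by
          rw [← ENNReal.ofReal_add (by linarith) (by linarith)]
          norm_num
      _ = P m T + ENNReal.ofReal ε := rfl

lemma uniform_tight {ε : ℝ} (hε : 0 < ε) :
    ∃ K : Set X, IsCompact K ∧ ∀ m, 1 - ENNReal.ofReal ε ≤ P m K := by
  haveI := fun m => hP m
  by_cases hne : Nonempty X
  swap
  · exfalso
    have h0 : (univ : Set X) = ∅ := by
      simp [Set.univ_eq_empty_iff.mpr (not_nonempty_iff.mp hne)]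
    have := measure_univ (μ := P 0)
    rw [h0, measure_empty] at this
    exact zero_ne_one this
  obtain ⟨x, hx⟩ := exists_dense_seq X
  have H : ∀ k : ℕ, ∃ n : ℕ, ∀ m,
      1 - ENNReal.ofReal (ε/2/2^k) ≤ P m (⋃ i ∈ Finset.range n, ball (x i) (1/(k+1))) := by
    intro k
    exact ball_cover hP hc x hx (by positivity) (by positivity)
  choose n hn using H
  set T : ℕ → Set X := fun k => ⋃ i ∈ Finset.range (n k), ball (x i) (1/(k+1)) with hTdef
  set K : Set X := ⋂ k, closure (T k) with hKdef
  have hKclosed : IsClosed K := isClosed_iInter fun k => isClosed_closure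
  have hKsub : ∀ k, K ⊆ ⋃ i ∈ Finset.range (n k), closedBall (x i) (1/(k+1)) := by
    intro k
    refine (iInter_subset _ k).trans ?_
    apply closure_minimal
    · exact Set.iUnion₂_mono fun i _ => ball_subset_closedBall
    · exact Set.Finite.isClosed_biUnion (Finset.finite_toSet _)
        fun i _ => isClosed_closedBall
  have hKtb : TotallyBounded K := by
    rw [Metric.totallyBounded_iff]
    intro r hr
    obtain ⟨k, hk⟩ := exists_nat_one_div_lt (show (0:ℝ) < r by linarith)
    refine ⟨x '' (Finset.range (n k) : Set ℕ), (Finset.finite_toSet _).image x, ?_⟩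
    refine (hKsub k).trans ?_
    intro z hz
    obtain ⟨i, hi, hzi⟩ := mem_iUnion₂.mp hz
    refine mem_iUnion₂.mpr ⟨x i, mem_image_of_mem x hi, mem_ball.mpr ?_⟩
    have := mem_closedBall.mp hzi
    have hlt : (1:ℝ)/(k+1) < r := hk
    linarith
  have hKcpt : IsCompact K := hKtb.isCompact_of_isClosed hKclosed
  refine ⟨K, hKcpt, fun m => ?_⟩
  have hTmeas : ∀ k, MeasurableSet (T k) := by
    intro k
    apply MeasurableSet.biUnion (Finset.countable_toSet _)
    intro i _
    exact measurableSet_ball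
  have hcompl : P m Kᶜ ≤ ENNReal.ofReal ε := by
    have h1 : P m Kᶜ ≤ ∑' k, P m (closure (T k))ᶜ := by
      rw [hKdef, compl_iInter]
      exact measure_iUnion_le _
    have h2 : ∀ k, P m (closure (T k))ᶜ ≤ ENNReal.ofReal (ε/2/2^k) := by
      intro k
      have h3 : P m (closure (T k))ᶜ ≤ P m (T k)ᶜ :=
        measure_mono (compl_subset_compl.mpr subset_closure)
      refine h3.trans ?_
      rw [prob_compl_eq_one_sub (hTmeas k), tsub_le_iff_right]
      calc (1:ℝ≥0∞) ≤ (1 - ENNReal.ofReal (ε/2/2^k)) + ENNReal.ofReal (ε/2/2^k) := le_tsub_add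
        _ ≤ P m (T k) + ENNReal.ofReal (ε/2/2^k) := add_le_add_left (hn k m) _
        _ = ENNReal.ofReal (ε/2/2^k) + P m (T k) := add_comm _ _
    have h4 : ∑' k, P m (closure (T k))ᶜ ≤ ∑' k, ENNReal.ofReal (ε/2/2^k) :=
      ENNReal.tsum_le_tsum h2
    have hsummable : Summable (fun k : ℕ => ε/2/2^k) := by
      exact (summable_geometric_two.mul_left (ε/2)).congr fun k => by
        rw [one_div, inv_pow]
        ring
    have h5 : ∑' k, ENNReal.ofReal (ε/2/2^k) = ENNReal.ofReal ε := by
      rw [← ENNReal.ofReal_tsum_of_nonneg (fun k => by positivity) hsummable,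
        tsum_geometric_two']
    exact h1.trans (h4.trans h5.le)
  have hPK : 1 - P m Kᶜ = P m K := by
    rw [prob_compl_eq_one_sub hKclosed.measurableSet,
      ENNReal.sub_sub_cancel one_ne_top prob_le_one]
  rw [tsub_le_iff_right]
  calc (1:ℝ≥0∞) ≤ (1 - P m Kᶜ) + P m Kᶜ := le_tsub_add
    _ ≤ (1 - P m Kᶜ) + ENNReal.ofReal ε := add_le_add_right hcompl _
    _ = P m K + ENNReal.ofReal ε := by rw [hPK]

end tight

end PUaux

namespace PUaux

variable {X : Type*} [MetricSpace X] [CompleteSpace X] [SecondCountableTopology X]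
  [MeasurableSpace X] [BorelSpace X]

variable (P : ℕ → Measure X)
variable (hP : ∀ m, IsProbabilityMeasure (P m))
variable (hc : ∀ ε : ℝ, 0 < ε → ∃ N : ℕ, ∀ m, N ≤ m → ∀ k, N ≤ k →
    levyProkhorovEDist (P m) (P k) ≤ ENNReal.ofReal ε)

/-- The content associated to a Lévy–Prokhorov Cauchy sequence of probability measures. -/
noncomputable def cont : Content X where
  toFun K := Real.toNNReal (lam P (K : Set X))
  mono' K₁ K₂ h := Real.toNNReal_mono (lam_mono hP h)
  sup_disjoint' K₁ K₂ hdisj _ _ := by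
    have hs : ((K₁ ⊔ K₂ : Compacts X) : Set X) = ↑K₁ ∪ ↑K₂ := rfl
    have heq : lam P ((K₁ ⊔ K₂ : Compacts X) : Set X) = lam P K₁ + lam P K₂ := by
      rw [hs]
      exact le_antisymm (lam_sup_le hP hc _ _ K₂.2)
        (lam_sup_disjoint hP hc _ _ hdisj K₁.2 K₂.2)
    show (lam P ((K₁ ⊔ K₂ : Compacts X) : Set X)).toNNReal
      = (lam P (K₁ : Set X)).toNNReal + (lam P (K₂ : Set X)).toNNReal
    rw [heq, Real.toNNReal_add (lam_nonneg hP _) (lam_nonneg hP _)]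
  sup_le' K₁ K₂ := by
    have hs : ((K₁ ⊔ K₂ : Compacts X) : Set X) = ↑K₁ ∪ ↑K₂ := rfl
    show (lam P ((K₁ ⊔ K₂ : Compacts X) : Set X)).toNNReal
      ≤ (lam P (K₁ : Set X)).toNNReal + (lam P (K₂ : Set X)).toNNReal
    calc Real.toNNReal (lam P ((K₁ ⊔ K₂ : Compacts X) : Set X))
        ≤ Real.toNNReal (lam P K₁ + lam P K₂) := by
          apply Real.toNNReal_mono
          rw [hs]
          exact lam_sup_le hP hc _ _ K₂.2
      _ = Real.toNNReal (lam P K₁) + Real.toNNReal (lam P K₂) :=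
          Real.toNNReal_add (lam_nonneg hP _) (lam_nonneg hP _)

/-- The limit measure. -/
noncomputable def nu : Measure X := (cont P hP hc).measure

lemma nu_open {U : Set X} (hU : IsOpen U) :
    nu P hP hc U = ⨆ (K : Compacts X) (_ : (K : Set X) ⊆ U),
      ENNReal.ofReal (lam P (K : Set X)) := by
  rw [nu, Content.measure_apply _ hU.measurableSet, Content.outerMeasure_of_isOpen _ U hU]
  rfl

lemma nu_le_ofReal_LL {U : Set X} (hU : IsOpen U) :
    nu P hP hc U ≤ ENNReal.ofReal (LL P U) := by
  rw [nu_open P hP hc hU]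
  apply iSup₂_le
  intro K hK
  exact ENNReal.ofReal_le_ofReal (lam_le hP hU hK)

lemma nu_univ : nu P hP hc univ = 1 := by
  apply le_antisymm
  · calc nu P hP hc univ ≤ ENNReal.ofReal (LL P univ) := nu_le_ofReal_LL P hP hc isOpen_univ
      _ ≤ ENNReal.ofReal 1 := ENNReal.ofReal_le_ofReal (LL_le_one hP univ)
      _ = 1 := by simp
  · apply ENNReal.le_of_forall_pos_le_add
    intro η ηpos _
    obtain ⟨K, hKcpt, hK⟩ := uniform_tight hP hc (show (0:ℝ) < η from ηpos)
    -- `lam P K ≥ 1 - η`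
    have hreal : ∀ (V : Set X), K ⊆ V → ∀ m, 1 - (η:ℝ) ≤ uu P V m := by
      intro V hKV m
      have h1 : ENNReal.ofReal (1 - (η:ℝ)) ≤ P m V := by
        calc ENNReal.ofReal (1 - (η:ℝ))
            = ENNReal.ofReal 1 - ENNReal.ofReal (η:ℝ) := ENNReal.ofReal_sub 1 η.coe_nonneg
          _ = 1 - ENNReal.ofReal (η:ℝ) := by simp
          _ ≤ P m K := hK m
          _ ≤ P m V := measure_mono hKV
      rcases le_or_gt (1 - (η:ℝ)) 0 with h0 | h0
      · exact h0.trans (uu_nonneg hP V m)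
      · have := ENNReal.toReal_mono (measure_ne_top _ _) h1
        rwa [ENNReal.toReal_ofReal h0.le] at this
    have hlam : 1 - (η:ℝ) ≤ lam P K := by
      apply le_csInf (lam_S_nonempty hP K)
      rintro x ⟨V, ⟨hV, hKV⟩, rfl⟩
      exact le_liminf_of_le ((uu_bddLe hP V).isCoboundedUnder_ge)
        (Eventually.of_forall fun m => hreal V hKV m)
    have hsup : ENNReal.ofReal (1 - (η:ℝ)) ≤ nu P hP hc univ := by
      rw [nu_open P hP hc isOpen_univ]
      refine le_trans (ENNReal.ofReal_le_ofReal hlam) ?_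
      exact le_iSup₂ (f := fun (K : Compacts X) (_ : (K:Set X) ⊆ univ) =>
        ENNReal.ofReal (lam P (K : Set X))) ⟨K, hKcpt⟩ (subset_univ K)
    calc (1:ℝ≥0∞) = ENNReal.ofReal 1 := by simp
      _ = ENNReal.ofReal ((1 - (η:ℝ)) + (η:ℝ)) := by ring_nf
      _ ≤ ENNReal.ofReal (1 - (η:ℝ)) + ENNReal.ofReal (η:ℝ) := ENNReal.ofReal_add_le
      _ ≤ nu P hP hc univ + ↑η :=
          add_le_add hsup (by simp [ENNReal.ofReal_coe_nnreal])

lemma nu_isProbability : IsProbabilityMeasure (nu P hP hc) := ⟨nu_univ P hP hc⟩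

lemma nu_le_liminf {U : Set X} (hU : IsOpen U) :
    nu P hP hc U ≤ atTop.liminf (fun m => P m U) := by
  refine (nu_le_ofReal_LL P hP hc hU).trans ?_
  -- `ofReal (LL P U) ≤ liminf (P · U)`
  have hfin : atTop.liminf (fun m => P m U) ≠ ⊤ := by
    have hle : atTop.liminf (fun m => P m U) ≤ 1 := by
      haveI := fun m => hP m
      exact liminf_le_of_frequently_le (Frequently.of_forall fun m => prob_le_one)
        (by isBoundedDefault)
    exact (hle.trans_lt one_lt_top).ne
  apply ENNReal.le_of_forall_pos_le_add
  intro η ηpos _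
  rcases le_or_gt (LL P U) 0 with h0 | h0
  · rw [ENNReal.ofReal_of_nonpos h0]
    exact zero_le
  · have hev : ∀ᶠ m in atTop, LL P U - (η:ℝ) < uu P U m :=
      eventually_lt_of_lt_liminf (by
        show LL P U - (η:ℝ) < LL P U
        have : (0:ℝ) < (η:ℝ) := ηpos
        linarith) (uu_bddGe hP U)
    have hev' : ∀ᶠ m in atTop, ENNReal.ofReal (LL P U - (η:ℝ)) ≤ P m U := by
      filter_upwards [hev] with m hm
      calc ENNReal.ofReal (LL P U - (η:ℝ)) ≤ ENNReal.ofReal (uu P U m) :=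
            ENNReal.ofReal_le_ofReal hm.le
        _ = P m U := ENNReal.ofReal_toReal (measure_ne_top _ _)
    have h1 : ENNReal.ofReal (LL P U - (η:ℝ)) ≤ atTop.liminf (fun m => P m U) :=
      le_liminf_of_le (by isBoundedDefault) hev'
    calc ENNReal.ofReal (LL P U)
        = ENNReal.ofReal ((LL P U - (η:ℝ)) + (η:ℝ)) := by ring_nf
      _ ≤ ENNReal.ofReal (LL P U - (η:ℝ)) + ENNReal.ofReal (η:ℝ) := ENNReal.ofReal_add_le
      _ ≤ atTop.liminf (fun m => P m U) + ↑η :=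
          add_le_add h1 (by simp [ENNReal.ofReal_coe_nnreal])

/-- wrap a measure into a probability measure -/
noncomputable def PM (μ : Measure X) (h : IsProbabilityMeasure μ) : ProbabilityMeasure X := ⟨μ, h⟩

@[simp] lemma PM_toMeasure (μ : Measure X) (h : IsProbabilityMeasure μ) :
    (PM μ h : Measure X) = μ := rfl

include hc in
/-- Main theorem of Part 1: a Lévy–Prokhorov Cauchy sequence of Borel probability measures on a
Polish space converges weakly. -/
theorem exists_weak_limit :
    ∃ (ν : Measure X) (hν : IsProbabilityMeasure ν),
      Tendsto (fun m => PM (P m) (hP m)) atTop (𝓝 (PM ν hν)) := by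
  refine ⟨nu P hP hc, nu_isProbability P hP hc, ?_⟩
  apply tendsto_of_forall_isOpen_le_liminf
  intro G hG
  have hEE := nu_le_liminf P hP hc hG
  -- convert the `ℝ≥0∞` inequality into the `ℝ≥0` one
  rw [← ENNReal.coe_le_coe]
  have aux : (ENNReal.ofNNReal (atTop.liminf
        (fun i => (PM (P i) (hP i)) G))) =
      atTop.liminf ((ENNReal.ofNNReal) ∘ (fun i => (PM (P i) (hP i)) G)) := by
    refine Monotone.map_liminf_of_continuousAt (F := atTop) ENNReal.coe_mono _ ?_ ?_ ?_
    · exact ENNReal.continuous_coe.continuousAt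
    · exact IsBoundedUnder.isCoboundedUnder_ge ⟨1, by
        simp only [eventually_map, eventually_atTop]
        exact ⟨0, fun m _ => ProbabilityMeasure.apply_le_one _ _⟩⟩
    · exact ⟨0, by simp⟩
  rw [aux]
  have hco : ∀ i, ((ENNReal.ofNNReal) ∘ (fun i => (PM (P i) (hP i)) G)) i
      = P i G := by
    intro i
    simp only [Function.comp_apply, ProbabilityMeasure.ennreal_coeFn_eq_coeFn_toMeasure]
    rfl
  have hleft : (ENNReal.ofNNReal ((PM (nu P hP hc) (nu_isProbability P hP hc)) G))
      = nu P hP hc G := by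
    simp only [ProbabilityMeasure.ennreal_coeFn_eq_coeFn_toMeasure]
    rfl
  rw [hleft]
  calc nu P hP hc G ≤ atTop.liminf (fun m => P m G) := hEE
    _ = atTop.liminf ((ENNReal.ofNNReal) ∘ (fun i => (PM (P i) (hP i)) G)) := by
        congr 1
        ext i
        rw [hco]

end PUaux

namespace PUaux

variable {X : Type*} [MetricSpace X] [MeasurableSpace X] [BorelSpace X]
variable {Ω : Type*} [MeasurableSpace Ω]

/-- Ky Fan / coupling bound for the Lévy–Prokhorov distance: if two random variables are
within `ε` of each other except on a set of measure `≤ ε`, then the Lévy–Prokhorov distance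
between their laws is at most `ε`. -/
lemma lp_coupling (μ : Measure Ω) [IsProbabilityMeasure μ]
    {ξ η : Ω → X} (hξ : Measurable ξ) (hη : Measurable η) {ε : ℝ} (hε : 0 < ε)
    (h : μ {ω | ENNReal.ofReal ε ≤ edist (ξ ω) (η ω)} ≤ ENNReal.ofReal ε) :
    levyProkhorovEDist (μ.map ξ) (μ.map η) ≤ ENNReal.ofReal ε := by
  haveI : IsProbabilityMeasure (μ.map ξ) := Measure.isProbabilityMeasure_map hξ.aemeasurable
  haveI : IsProbabilityMeasure (μ.map η) := Measure.isProbabilityMeasure_map hη.aemeasurable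
  apply levyProkhorovEDist_le_of_forall_le
  intro ε' B hεε' hε'top hB
  rw [Measure.map_apply hξ hB, Measure.map_apply hη isOpen_thickening.measurableSet]
  set A : Set Ω := {ω | ENNReal.ofReal ε ≤ edist (ξ ω) (η ω)} with hAdef
  have hsub : ξ⁻¹' B ∩ Aᶜ ⊆ η⁻¹' (thickening ε'.toReal B) := by
    rintro ω ⟨hωB, hωA⟩
    have hωA' : edist (ξ ω) (η ω) < ENNReal.ofReal ε := lt_of_not_ge hωA
    rw [edist_dist] at hωA'
    have hd : dist (ξ ω) (η ω) < ε := by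
      by_contra hcon
      exact absurd (ENNReal.ofReal_le_ofReal (not_lt.mp hcon)) (not_le.mpr hωA')
    have hεε'R : ε < ε'.toReal := by
      have := ENNReal.toReal_lt_toReal ENNReal.ofReal_ne_top hε'top.ne |>.mpr hεε'
      rwa [ENNReal.toReal_ofReal hε.le] at this
    exact mem_thickening_iff.mpr ⟨ξ ω, hωB, by
      rw [dist_comm]
      linarith⟩
  calc μ (ξ⁻¹' B) ≤ μ ((ξ⁻¹' B ∩ Aᶜ) ∪ A) := by
        apply measure_mono
        intro ω hω
        by_cases hA : ω ∈ A
        · exact Or.inr hA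
        · exact Or.inl ⟨hω, hA⟩
    _ ≤ μ (ξ⁻¹' B ∩ Aᶜ) + μ A := measure_union_le _ _
    _ ≤ μ (η⁻¹' (thickening ε'.toReal B)) + ENNReal.ofReal ε :=
        add_le_add (measure_mono hsub) h
    _ ≤ μ (η⁻¹' (thickening ε'.toReal B)) + ε' := add_le_add_right hεε'.le _

/-- Markov + coupling: an integral bound on the distance gives a Lévy–Prokhorov bound. -/
lemma lp_of_lintegral_edist_le (μ : Measure Ω) [IsProbabilityMeasure μ]
    {ξ η : Ω → X} (hξ : Measurable ξ) (hη : Measurable η) {ε : ℝ} (hε : 0 < ε)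
    [SecondCountableTopology X]
    (h : ∫⁻ ω, edist (ξ ω) (η ω) ∂μ ≤ ENNReal.ofReal ε * ENNReal.ofReal ε) :
    levyProkhorovEDist (μ.map ξ) (μ.map η) ≤ ENNReal.ofReal ε := by
  apply lp_coupling μ hξ hη hε
  have hmark := mul_meas_ge_le_lintegral₀ (μ := μ) ((hξ.edist hη).aemeasurable) (ENNReal.ofReal ε)
  have h2 : ENNReal.ofReal ε * μ {ω | ENNReal.ofReal ε ≤ edist (ξ ω) (η ω)}
      ≤ ENNReal.ofReal ε * ENNReal.ofReal ε := hmark.trans h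
  exact (ENNReal.mul_le_mul_iff_right (ENNReal.ofReal_pos.mpr hε).ne' ENNReal.ofReal_ne_top).mp h2

end PUaux

namespace PUaux

section tails

set_option maxHeartbeats 1000000

variable {E : Type*} [NormedAddCommGroup E] [SecondCountableTopology E]
  [MeasurableSpace E] [BorelSpace E] [NormedSpace ℝ E] [CompleteSpace E]
variable {Ω : Type*} [MeasurableSpace Ω] (μ : Measure Ω) [IsProbabilityMeasure μ]
variable {I : Type*} [Countable I] [DecidableEq I] {a : I → ℝ} (ha : Summable fun j => |a j|)
variable {V : I → Ω → E} (hV : ∀ j, Measurable (V j))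
variable {C : ℝ≥0∞} (hC : C ≠ ⊤) (hCb : ∀ j, (∫⁻ ω, (‖V j ω‖₊ : ℝ≥0∞) ∂μ) ≤ C)

include hV in
lemma meas_summand (j : I) : Measurable fun ω => ((‖a j • V j ω‖₊ : ℝ≥0∞)) :=
  (((continuous_const_smul (a j)).measurable.comp (hV j))).nnnorm.coe_nnreal_ennreal

include hV hCb in
lemma lint_summand (j : I) :
    ∫⁻ ω, ((‖a j • V j ω‖₊ : ℝ≥0∞)) ∂μ ≤ ENNReal.ofReal |a j| * C := by
  have hpt : ∀ ω, ((‖a j • V j ω‖₊ : ℝ≥0∞)) = ENNReal.ofReal |a j| * (‖V j ω‖₊ : ℝ≥0∞) := by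
    intro ω
    rw [← enorm_eq_nnnorm, ← enorm_eq_nnnorm, ← ofReal_norm, ← ofReal_norm, norm_smul, Real.norm_eq_abs,
      ENNReal.ofReal_mul (abs_nonneg _)]
  simp only [hpt]
  rw [lintegral_const_mul' _ _ ENNReal.ofReal_ne_top]
  exact mul_le_mul_right (hCb j) _

include ha hV hC hCb in
/-- Tail bound for the a.s.-convergent series. -/
lemma lintegral_edist_tail (F : Finset I) {g : Ω → E}
    (hg : ∀ᵐ ω ∂μ, HasSum (fun j => a j • V j ω) (g ω)) :
    ∫⁻ ω, edist (g ω) (∑ j ∈ F, a j • V j ω) ∂μ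
      ≤ (∑' j : {j : I // j ∉ F}, ENNReal.ofReal |a (j : I)|) * C := by
  have hmeasj := fun j : I => meas_summand (a := a) hV j
  have hfin : ∫⁻ ω, (∑' j : I, ((‖a j • V j ω‖₊ : ℝ≥0∞))) ∂μ ≠ ⊤ := by
    rw [lintegral_tsum fun j => (hmeasj j).aemeasurable]
    have h1 : ∑' j : I, ∫⁻ ω, ((‖a j • V j ω‖₊:ℝ≥0∞)) ∂μ
        ≤ ∑' j : I, ENNReal.ofReal |a j| * C :=
      ENNReal.tsum_le_tsum fun j => lint_summand μ hV hCb j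
    have h2 : ∑' j : I, ENNReal.ofReal |a j| * C = ENNReal.ofReal (∑' j, |a j|) * C := by
      rw [ENNReal.tsum_mul_right, ENNReal.ofReal_tsum_of_nonneg (fun j => abs_nonneg _) ha]
    exact ((h1.trans h2.le).trans_lt
      (ENNReal.mul_lt_top ENNReal.ofReal_lt_top (lt_top_iff_ne_top.mpr hC))).ne
  have hGae : ∀ᵐ ω ∂μ, (∑' j : I, ((‖a j • V j ω‖₊ : ℝ≥0∞))) < ⊤ :=
    ae_lt_top (Measurable.ennreal_tsum hmeasj) hfin
  have hptwise : ∀ᵐ ω ∂μ, edist (g ω) (∑ j ∈ F, a j • V j ω)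
      ≤ ∑' (j : {j : I // j ∉ F}), ((‖a (j:I) • V (j:I) ω‖₊ : ℝ≥0∞)) := by
    filter_upwards [hg, hGae] with ω hω hGω
    have hsummableNN : Summable fun j : I => ‖a j • V j ω‖₊ :=
      ENNReal.tsum_coe_ne_top_iff_summable.mp hGω.ne
    have hsummable : Summable fun j : I => ‖a j • V j ω‖ := by
      have := NNReal.summable_coe.mpr hsummableNN
      simpa [coe_nnnorm] using this
    have h0 : HasSum (fun j : I => a j • V j ω)
        ((g ω - ∑ j ∈ F, a j • V j ω) + ∑ j ∈ F, a j • V j ω) := by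
      rwa [sub_add_cancel]
    have hcompl : HasSum (fun j : {j : I // j ∉ F} => a (j:I) • V (j:I) ω)
        (g ω - ∑ j ∈ F, a j • V j ω) :=
      (Finset.hasSum_compl_iff F).mpr h0
    calc edist (g ω) (∑ j ∈ F, a j • V j ω)
        = ENNReal.ofReal ‖g ω - ∑ j ∈ F, a j • V j ω‖ := by rw [edist_dist, dist_eq_norm]
      _ = ENNReal.ofReal ‖∑' (j : {j : I // j ∉ F}), a (j:I) • V (j:I) ω‖ := by
          rw [hcompl.tsum_eq]
      _ ≤ ENNReal.ofReal (∑' (j : {j : I // j ∉ F}), ‖a (j:I) • V (j:I) ω‖) :=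
          ENNReal.ofReal_le_ofReal (norm_tsum_le_tsum_norm (hsummable.subtype _))
      _ = ∑' (j : {j : I // j ∉ F}), ENNReal.ofReal ‖a (j:I) • V (j:I) ω‖ :=
          ENNReal.ofReal_tsum_of_nonneg (fun _ => norm_nonneg _) (hsummable.subtype _)
      _ = ∑' (j : {j : I // j ∉ F}), ((‖a (j:I) • V (j:I) ω‖₊ : ℝ≥0∞)) := by
          simp only [ofReal_norm]; rfl
  calc ∫⁻ ω, edist (g ω) (∑ j ∈ F, a j • V j ω) ∂μ
      ≤ ∫⁻ ω, ∑' (j : {j : I // j ∉ F}), ((‖a (j:I) • V (j:I) ω‖₊ : ℝ≥0∞)) ∂μ :=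
        lintegral_mono_ae hptwise
    _ = ∑' (j : {j : I // j ∉ F}), ∫⁻ ω, ((‖a (j:I) • V (j:I) ω‖₊ : ℝ≥0∞)) ∂μ :=
        lintegral_tsum fun j => (hmeasj (j:I)).aemeasurable
    _ ≤ ∑' (j : {j : I // j ∉ F}), ENNReal.ofReal |a (j:I)| * C :=
        ENNReal.tsum_le_tsum fun j => lint_summand μ hV hCb (j:I)
    _ = (∑' j : {j : I // j ∉ F}, ENNReal.ofReal |a (j:I)|) * C := ENNReal.tsum_mul_right

lemma finset_sum_le_tsum_subtype (F G : Finset I) (h : I → ℝ≥0∞) :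
    ∑ j ∈ G \ F, h j ≤ ∑' j : {j : I // j ∉ F}, h (j : I) := by
  calc ∑ j ∈ G \ F, h j = ∑ j ∈ G \ F, Set.indicator {j : I | j ∉ F} h j :=
        Finset.sum_congr rfl (fun j hj => by
          rw [Set.indicator_of_mem]
          exact (Finset.mem_sdiff.mp hj).2)
    _ ≤ ∑' j : I, Set.indicator {j : I | j ∉ F} h j := ENNReal.sum_le_tsum _
    _ = ∑' j : {j : I // j ∉ F}, h (j : I) := (tsum_subtype _ _).symm

include hV hCb in
/-- Finite-truncation difference bound. -/
lemma lintegral_edist_diff {F G : Finset I} (hFG : F ⊆ G) :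
    ∫⁻ ω, edist (∑ j ∈ G, a j • V j ω) (∑ j ∈ F, a j • V j ω) ∂μ
      ≤ (∑' j : {j : I // j ∉ F}, ENNReal.ofReal |a (j : I)|) * C := by
  have hmeasj := fun j : I => meas_summand (a := a) hV j
  have hptwise : ∀ ω, edist (∑ j ∈ G, a j • V j ω) (∑ j ∈ F, a j • V j ω)
      ≤ ∑ j ∈ G \ F, ((‖a j • V j ω‖₊ : ℝ≥0∞)) := by
    intro ω
    calc edist (∑ j ∈ G, a j • V j ω) (∑ j ∈ F, a j • V j ω)
        = ENNReal.ofReal ‖(∑ j ∈ G, a j • V j ω) - ∑ j ∈ F, a j • V j ω‖ := by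
          rw [edist_dist, dist_eq_norm]
      _ = ENNReal.ofReal ‖∑ j ∈ G \ F, a j • V j ω‖ := by
          rw [Finset.sum_sdiff_eq_sub hFG]
      _ ≤ ENNReal.ofReal (∑ j ∈ G \ F, ‖a j • V j ω‖) :=
          ENNReal.ofReal_le_ofReal (norm_sum_le _ _)
      _ = ∑ j ∈ G \ F, ENNReal.ofReal ‖a j • V j ω‖ :=
          ENNReal.ofReal_sum_of_nonneg (fun j _ => norm_nonneg _)
      _ = ∑ j ∈ G \ F, ((‖a j • V j ω‖₊ : ℝ≥0∞)) := by
          simp only [ofReal_norm]; rfl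
  calc ∫⁻ ω, edist (∑ j ∈ G, a j • V j ω) (∑ j ∈ F, a j • V j ω) ∂μ
      ≤ ∫⁻ ω, ∑ j ∈ G \ F, ((‖a j • V j ω‖₊ : ℝ≥0∞)) ∂μ :=
        lintegral_mono hptwise
    _ = ∑ j ∈ G \ F, ∫⁻ ω, ((‖a j • V j ω‖₊ : ℝ≥0∞)) ∂μ :=
        lintegral_finset_sum _ (fun j _ => hmeasj j)
    _ ≤ ∑ j ∈ G \ F, ENNReal.ofReal |a j| * C :=
        Finset.sum_le_sum (fun j _ => lint_summand μ hV hCb j)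
    _ = (∑ j ∈ G \ F, ENNReal.ofReal |a j|) * C := by rw [Finset.sum_mul]
    _ ≤ (∑' j : {j : I // j ∉ F}, ENNReal.ofReal |a (j : I)|) * C :=
        mul_le_mul_left (finset_sum_le_tsum_subtype F G _) _

end tails

end PUaux


open PUaux in
/-- **Lemma 2** of Peligrad–Utev, "Invariance principle for stochastic processes with
short memory". If `ψ⁽ⁿ⁾ = ∑_{j∈I} a_j U_j⁽ⁿ⁾` (convergence in sup norm a.s.) with
`∑|a_j| < ∞` and uniformly bounded expected sup norms, and for each `m` the finite sum
`∑_{j∈I_m} a_j U_j⁽ⁿ⁾` converges in distribution (as `n → ∞`) to a random element of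
`C([0,1]^d,ℝ)` with law `Z m`, then there is a limiting law `ν` on `C([0,1]^d,ℝ)` with
`Z m → ν` weakly as `m → ∞` and `ψ⁽ⁿ⁾ → ν` in distribution as `n → ∞`. -/
theorem stmt2
    {Ω : Type*} [MeasurableSpace Ω] (μ : Measure Ω) [IsProbabilityMeasure μ]
    {d : ℕ} {I : Type*} [Countable I]
    [mE : MeasurableSpace C(Cube d, ℝ)] [BorelSpace C(Cube d, ℝ)]
    (a : I → ℝ) (ha : Summable fun j => |a j|)
    (U : ℕ → I → Ω → C(Cube d, ℝ))
    (hUmeas : ∀ n j, Measurable (U n j))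
    (hbound : ∃ C : ℝ≥0∞, C < ⊤ ∧ ∀ n j, (∫⁻ ω, (‖U n j ω‖₊ : ℝ≥0∞) ∂μ) ≤ C)
    (ψ : ℕ → Ω → C(Cube d, ℝ))
    (hψmeas : ∀ n, Measurable (ψ n))
    (hψ : ∀ n, ∀ᵐ ω ∂μ, HasSum (fun j => a j • U n j ω) (ψ n ω))
    (Im : ℕ → Finset I) (hImono : Monotone Im) (hIcover : ∀ j : I, ∃ m, j ∈ Im m)
    (Z : ℕ → Measure C(Cube d, ℝ)) (hZprob : ∀ m, IsProbabilityMeasure (Z m))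
    (hZconv : ∀ m, ∀ f : BoundedContinuousFunction C(Cube d, ℝ) ℝ,
      Tendsto (fun n => ∫ ω, f (∑ j ∈ Im m, a j • U n j ω) ∂μ)
        atTop (𝓝 (∫ x, f x ∂(Z m)))) :
    ∃ ν : Measure C(Cube d, ℝ), IsProbabilityMeasure ν ∧
      (∀ f : BoundedContinuousFunction C(Cube d, ℝ) ℝ,
        Tendsto (fun m => ∫ x, f x ∂(Z m)) atTop (𝓝 (∫ x, f x ∂ν))) ∧
      (∀ f : BoundedContinuousFunction C(Cube d, ℝ) ℝ,
        Tendsto (fun n => ∫ ω, f (ψ n ω) ∂μ) atTop (𝓝 (∫ x, f x ∂ν))) := by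
  classical
  haveI : TopologicalSpace.SeparableSpace C(Cube d, ℝ) := inferInstance
  haveI : SecondCountableTopology C(Cube d, ℝ) := UniformSpace.secondCountable_of_separable _
  obtain ⟨C, hCtop, hCb⟩ := hbound
  -- the truncated sums
  set S : ℕ → ℕ → Ω → C(Cube d, ℝ) := fun m n ω => ∑ j ∈ Im m, a j • U n j ω with hSdef
  have hSmeas : ∀ m n, Measurable (S m n) := fun m n =>
    Finset.measurable_sum _ (fun j _ => (continuous_const_smul (a j)).measurable.comp (hUmeas n j))
  haveI hlawψ : ∀ n, IsProbabilityMeasure (μ.map (ψ n)) := fun n =>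
    Measure.isProbabilityMeasure_map (hψmeas n).aemeasurable
  haveI hlawS : ∀ m n, IsProbabilityMeasure (μ.map (S m n)) := fun m n =>
    Measure.isProbabilityMeasure_map (hSmeas m n).aemeasurable
  -- tail coefficients
  set T : ℕ → ℝ≥0∞ := fun m => ∑' j : {j : I // j ∉ Im m}, ENNReal.ofReal |a (j : I)|
    with hTdef
  have htail : ∀ n m, ∫⁻ ω, edist (ψ n ω) (S m n ω) ∂μ ≤ T m * C := fun n m =>
    lintegral_edist_tail μ ha (hUmeas n) hCtop.ne (hCb n) (Im m) (hψ n)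
  have hmid : ∀ n m k, m ≤ k → ∫⁻ ω, edist (S k n ω) (S m n ω) ∂μ ≤ T m * C :=
    fun n m k hmk => lintegral_edist_diff μ (hUmeas n) (hCb n) (hImono hmk)
  -- `T` vanishes at infinity
  have hT0 : Tendsto T atTop (𝓝 0) := by
    have h1 : Tendsto (fun s : Finset I => ∑' j : {j : I // j ∉ s}, |a (j : I)|) atTop (𝓝 0) :=
      _root_.tendsto_tsum_compl_atTop_zero (fun j => |a j|)
    have hIm : Tendsto Im atTop atTop := by
      rw [tendsto_atTop_atTop]
      intro F
      choose g hg using hIcover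
      refine ⟨F.sup g, fun m hm => ?_⟩
      intro j hj
      exact (hImono ((Finset.le_sup hj).trans hm)) (hg j)
    have h2 : Tendsto (fun m => ∑' j : {j : I // j ∉ Im m}, |a (j : I)|) atTop (𝓝 0) :=
      h1.comp hIm
    have h3 : ∀ m, T m = ENNReal.ofReal (∑' j : {j : I // j ∉ Im m}, |a (j : I)|) :=
      fun m => (ENNReal.ofReal_tsum_of_nonneg (fun _ => abs_nonneg _) (ha.subtype _)).symm
    have h4 : Tendsto (fun m => ENNReal.ofReal (∑' j : {j : I // j ∉ Im m}, |a (j : I)|))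
        atTop (𝓝 (ENNReal.ofReal 0)) := (ENNReal.continuous_ofReal.tendsto 0).comp h2
    rw [ENNReal.ofReal_zero] at h4
    exact Tendsto.congr (fun m => (h3 m).symm) h4
  -- coupling estimates
  have hcoup : ∀ ε : ℝ, 0 < ε → ∃ M : ℕ, ∀ m, M ≤ m →
      (∀ n, levyProkhorovEDist (μ.map (ψ n)) (μ.map (S m n)) ≤ ENNReal.ofReal ε) ∧
      (∀ k, m ≤ k → ∀ n,
        levyProkhorovEDist (μ.map (S m n)) (μ.map (S k n)) ≤ ENNReal.ofReal ε) := by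
    intro ε hε
    have hTC : Tendsto (fun m => T m * C) atTop (𝓝 0) := by
      have := ENNReal.Tendsto.mul_const hT0 (Or.inr hCtop.ne)
      simpa using this
    have hpos : (0:ℝ≥0∞) < ENNReal.ofReal ε * ENNReal.ofReal ε :=
      ENNReal.mul_pos (ENNReal.ofReal_pos.mpr hε).ne' (ENNReal.ofReal_pos.mpr hε).ne'
    have hev : ∀ᶠ m in atTop, T m * C ≤ ENNReal.ofReal ε * ENNReal.ofReal ε :=
      hTC.eventually (eventually_le_nhds hpos)
    obtain ⟨M, hM⟩ := eventually_atTop.mp hev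
    refine ⟨M, fun m hm => ⟨fun n => ?_, fun k hmk n => ?_⟩⟩
    · exact lp_of_lintegral_edist_le μ (hψmeas n) (hSmeas m n) hε
        ((htail n m).trans (hM m hm))
    · have h := lp_of_lintegral_edist_le μ (hSmeas k n) (hSmeas m n) hε
        ((hmid n m k hmk).trans (hM m hm))
      rwa [levyProkhorovEDist_comm] at h
  -- laws converge: `S m ⬝ → Z m` in distribution
  have hSZ : ∀ m, Tendsto (fun n => PM (μ.map (S m n)) (hlawS m n)) atTop
      (𝓝 (PM (Z m) (hZprob m))) := by
    intro m
    rw [ProbabilityMeasure.tendsto_iff_forall_integral_tendsto]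
    intro f
    have heq : ∀ n, ∫ x, f x ∂(μ.map (S m n)) = ∫ ω, f (S m n ω) ∂μ := fun n =>
      integral_map (hSmeas m n).aemeasurable f.continuous.measurable.aestronglyMeasurable
    show Tendsto (fun n => ∫ x, f x ∂(μ.map (S m n))) atTop (𝓝 (∫ x, f x ∂(Z m)))
    exact Tendsto.congr (fun n => (heq n).symm) (hZconv m f)
  set H := LevyProkhorov.probabilityMeasureHomeomorph (Ω := C(Cube d, ℝ))
    with hHdef
  have hdistH : ∀ p q : ProbabilityMeasure C(Cube d, ℝ),
      dist (H p) (H q) = levyProkhorovDist (p : Measure C(Cube d, ℝ)) (q : Measure C(Cube d, ℝ)) :=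
    fun p q => rfl
  have hSZd : ∀ m, Tendsto (fun n => dist (H (PM (μ.map (S m n)) (hlawS m n)))
      (H (PM (Z m) (hZprob m)))) atTop (𝓝 0) := fun m =>
    tendsto_iff_dist_tendsto_zero.mp ((H.continuous.tendsto _).comp (hSZ m))
  -- the sequence (Z m) is Lévy-Prokhorov Cauchy
  have hZc : ∀ ε : ℝ, 0 < ε → ∃ N : ℕ, ∀ m, N ≤ m → ∀ k, N ≤ k →
      levyProkhorovEDist (Z m) (Z k) ≤ ENNReal.ofReal ε := by
    intro ε hε
    obtain ⟨M, hM⟩ := hcoup (ε/3) (by linarith)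
    have main : ∀ m k, M ≤ m → M ≤ k → m ≤ k →
        levyProkhorovEDist (Z m) (Z k) ≤ ENNReal.ofReal ε := by
      intro m k hm hk hmk
      have hkey : ∀ n, levyProkhorovEDist (Z m) (Z k) ≤
          ENNReal.ofReal (dist (H (PM (μ.map (S m n)) (hlawS m n))) (H (PM (Z m) (hZprob m))))
          + (ENNReal.ofReal (ε/3)
            + ENNReal.ofReal (dist (H (PM (μ.map (S k n)) (hlawS k n)))
                (H (PM (Z k) (hZprob k))))) := by
        intro n
        have t1 : levyProkhorovEDist (Z m) (Z k) ≤
            levyProkhorovEDist (Z m) (μ.map (S m n))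
            + (levyProkhorovEDist (μ.map (S m n)) (μ.map (S k n))
              + levyProkhorovEDist (μ.map (S k n)) (Z k)) := by
          calc levyProkhorovEDist (Z m) (Z k)
              ≤ levyProkhorovEDist (Z m) (μ.map (S m n))
                + levyProkhorovEDist (μ.map (S m n)) (Z k) :=
                levyProkhorovEDist_triangle _ _ _
            _ ≤ levyProkhorovEDist (Z m) (μ.map (S m n))
                + (levyProkhorovEDist (μ.map (S m n)) (μ.map (S k n))
                  + levyProkhorovEDist (μ.map (S k n)) (Z k)) :=
                add_le_add_right (levyProkhorovEDist_triangle _ _ _) _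
        refine t1.trans (add_le_add ?_ (add_le_add ((hM m hm).2 k hmk n) ?_))
        · rw [hdistH, PM_toMeasure, PM_toMeasure, levyProkhorovDist,
            ENNReal.ofReal_toReal (levyProkhorovEDist_ne_top _ _), levyProkhorovEDist_comm]
        · rw [hdistH, PM_toMeasure, PM_toMeasure, levyProkhorovDist,
            ENNReal.ofReal_toReal (levyProkhorovEDist_ne_top _ _)]
      have hlim : Tendsto (fun n =>
          ENNReal.ofReal (dist (H (PM (μ.map (S m n)) (hlawS m n))) (H (PM (Z m) (hZprob m))))
          + (ENNReal.ofReal (ε/3)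
            + ENNReal.ofReal (dist (H (PM (μ.map (S k n)) (hlawS k n)))
                (H (PM (Z k) (hZprob k)))))) atTop
          (𝓝 (0 + (ENNReal.ofReal (ε/3) + 0))) := by
        apply Tendsto.add
        · have := (ENNReal.continuous_ofReal.tendsto 0).comp (hSZd m)
          simpa [Function.comp_def] using this
        · apply Tendsto.add tendsto_const_nhds
          have := (ENNReal.continuous_ofReal.tendsto 0).comp (hSZd k)
          simpa [Function.comp_def] using this
      have h := ge_of_tendsto hlim (Eventually.of_forall hkey)
      rw [zero_add, add_zero] at h
      exact h.trans (ENNReal.ofReal_le_ofReal (by linarith))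
    refine ⟨M, fun m hm k hk => ?_⟩
    rcases le_total m k with h | h
    · exact main m k hm hk h
    · rw [levyProkhorovEDist_comm]
      exact main k m hk hm h
  -- apply the completeness theorem of Part 1
  obtain ⟨ν, hν, hZν⟩ := exists_weak_limit Z hZprob hZc
  refine ⟨ν, hν, ?_, ?_⟩
  · intro f
    exact ProbabilityMeasure.tendsto_iff_forall_integral_tendsto.mp hZν f
  · -- convergence of ψ
    have hZνd : Tendsto (fun m => dist (H (PM (Z m) (hZprob m))) (H (PM ν hν))) atTop (𝓝 0) :=
      tendsto_iff_dist_tendsto_zero.mp ((H.continuous.tendsto _).comp hZν)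
    have hψν : Tendsto (fun n => PM (μ.map (ψ n)) (hlawψ n)) atTop (𝓝 (PM ν hν)) := by
      have hLP : Tendsto (fun n => H (PM (μ.map (ψ n)) (hlawψ n))) atTop (𝓝 (H (PM ν hν))) := by
        rw [Metric.tendsto_atTop]
        intro ε hε
        obtain ⟨M, hM⟩ := hcoup (ε/6) (by linarith)
        obtain ⟨m₀, hm₀M, hm₀d⟩ : ∃ m₀, M ≤ m₀ ∧
            dist (H (PM (Z m₀) (hZprob m₀))) (H (PM ν hν)) < ε/6 := by
          have h1 := hZνd.eventually (gt_mem_nhds (show (0:ℝ) < ε/6 by linarith))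
          obtain ⟨m₀, h₁, h₂⟩ := ((eventually_ge_atTop M).and h1).exists
          exact ⟨m₀, h₁, h₂⟩
        have h2 := (hSZd m₀).eventually (gt_mem_nhds (show (0:ℝ) < ε/6 by linarith))
        obtain ⟨N, hN⟩ := eventually_atTop.mp h2
        refine ⟨N, fun n hn => ?_⟩
        have d1 : dist (H (PM (μ.map (ψ n)) (hlawψ n))) (H (PM (μ.map (S m₀ n)) (hlawS m₀ n)))
            ≤ ε/6 := by
          rw [hdistH, PM_toMeasure, PM_toMeasure]
          have hE := (hM m₀ hm₀M).1 n
          have h3 : levyProkhorovDist (μ.map (ψ n)) (μ.map (S m₀ n)) ≤ ε/6 := by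
            have h4 := ENNReal.toReal_mono ENNReal.ofReal_ne_top hE
            rwa [ENNReal.toReal_ofReal (by linarith)] at h4
          exact h3
        have d2 := hN n hn
        have tri : dist (H (PM (μ.map (ψ n)) (hlawψ n))) (H (PM ν hν)) ≤
            dist (H (PM (μ.map (ψ n)) (hlawψ n))) (H (PM (μ.map (S m₀ n)) (hlawS m₀ n)))
            + dist (H (PM (μ.map (S m₀ n)) (hlawS m₀ n))) (H (PM (Z m₀) (hZprob m₀)))
            + dist (H (PM (Z m₀) (hZprob m₀))) (H (PM ν hν)) := dist_triangle4 _ _ _ _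
        calc dist (H (PM (μ.map (ψ n)) (hlawψ n))) (H (PM ν hν)) ≤ _ := tri
          _ < ε/6 + ε/6 + ε/6 := by
              apply add_lt_add_of_lt_of_le ?_ hm₀d.le
              exact add_lt_add_of_le_of_lt d1 d2
          _ < ε := by linarith
      have h5 := ((H.symm).continuous.tendsto _).comp hLP
      simpa [Function.comp_def] using h5
    intro f
    have h1 := ProbabilityMeasure.tendsto_iff_forall_integral_tendsto.mp hψν f
    have heq : ∀ n, ∫ x, f x ∂(μ.map (ψ n)) = ∫ ω, f (ψ n ω) ∂μ := fun n =>
      integral_map (hψmeas n).aemeasurable f.continuous.measurable.aestronglyMeasurable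
    exact Tendsto.congr (fun n => heq n) h1
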